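/- Let m ≥ 2 and fix an integer k ≥ 2. Then q_{k−1} · λ(A_k^{(1)}) + (q_k − q_{k−1}) · λ(A_k^{(2)}) = 1, where λ denotes the length of an interval; equivalently, the total Lebesgue measure of the sets R_k(u) reduced modulo 1, summed over 0 ≤ u < q_k, equals 1. -/

import Mathlib

noncomputable section

/-- Denominators of the convergents of `α = [0; 1, m, 1, m, …]`:
`q_0 = q_1 = 1`, `q_n = m·q_{n-1} + q_{n-2}` for even `n ≥ 2`, and
`q_n = q_{n-1} + q_{n-2}` for odd `n ≥ 3`. -/
def qseq (m : ℕ) : ℕ → ℕ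
  | 0 => 1
  | 1 => 1
  | n + 2 => (if n % 2 = 0 then m else 1) * qseq m (n + 1) + qseq m n

/-- `p_k(u) = (-1)^k u φ` where `φ = (m + 2 + √(m² + 4m))/2`. -/
def pk (m : ℕ) (k : ℕ) (u : ℤ) : ℝ :=
  (-1 : ℝ) ^ k * u * ((m + 2 + Real.sqrt (m ^ 2 + 4 * m)) / 2)

/-- The interval `A_k^{(1)}` (here `k₀ = ⌊k/2⌋`). -/
def A1 (m k : ℕ) : Set ℝ :=
  let d : ℝ := m ^ 2 + 4 * m
  let φ : ℝ := (m + 2 + Real.sqrt d) / 2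
  let k₀ : ℕ := k / 2
  if k % 2 = 0 then
    Set.Ico ((m - Real.sqrt d) / (2 * φ ^ k₀)) (1 / φ ^ k₀)
  else
    Set.Ico (-(1 / φ ^ (k₀ + 1))) ((-m + Real.sqrt d) / (2 * φ ^ k₀))

/-- The interval `A_k^{(2)}` (here `k₀ = ⌊k/2⌋`). -/
def A2 (m k : ℕ) : Set ℝ :=
  let d : ℝ := m ^ 2 + 4 * m
  let φ : ℝ := (m + 2 + Real.sqrt d) / 2
  let k₀ : ℕ := k / 2
  if k % 2 = 0 then
    Set.Ico ((m - Real.sqrt d) / (2 * φ ^ k₀)) (1 / φ ^ (k₀ + 1))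
  else
    Set.Ico (-(1 / φ ^ (k₀ + 1))) ((-m - 1 + Real.sqrt d) / φ ^ k₀)

/-- The set `R_k(u) = p_k(u) + A_k^{(1)}` for `0 ≤ u < q_{k-1}` and
`R_k(u) = p_k(u) + A_k^{(2)}` for `q_{k-1} ≤ u < q_k`. -/
def Rk (m k : ℕ) (u : ℕ) : Set ℝ :=
  (fun x => pk m k u + x) '' (if u < qseq m (k - 1) then A1 m k else A2 m k)

/-- The total measure of the sets `R_k(u) mod 1`, `0 ≤ u < q_k`, equals `1`:
`q_{k-1} λ(A_k^{(1)}) + (q_k - q_{k-1}) λ(A_k^{(2)}) = 1`. -/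
lemma qseq_step (m n : ℕ) : qseq m (n+2) = (if n % 2 = 0 then m else 1) * qseq m (n + 1) + qseq m n := by
  rw [qseq]

lemma qseq_odd (m n : ℕ) : qseq m (2*n+3) = qseq m (2*n+2) + qseq m (2*n+1) := by
  have h := qseq_step m (2*n+1)
  have hmod : (2*n+1) % 2 = 1 := by omega
  rw [hmod] at h; norm_num at h
  rw [show 2*n+3 = (2*n+1)+2 by ring, h, show 2*n+1+1 = 2*n+2 by ring]

lemma qseq_even (m n : ℕ) : qseq m (2*n+4) = m * qseq m (2*n+3) + qseq m (2*n+2) := by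
  have h := qseq_step m (2*n+2)
  have hmod : (2*n+2) % 2 = 0 := by omega
  rw [hmod] at h; norm_num at h
  rw [show 2*n+4 = (2*n+2)+2 by ring, h, show 2*n+2+1 = 2*n+3 by ring]

lemma key (m : ℕ) (n : ℕ) :
    (qseq m (2*n+2) : ℝ) + (qseq m (2*n+1) : ℝ) * ((Real.sqrt ((m:ℝ)^2+4*m) - m)/2)
      = (((m:ℝ) + 2 + Real.sqrt ((m:ℝ)^2+4*m))/2)^(n+1) := by
  have hsd : (Real.sqrt ((m:ℝ)^2+4*m))^2 = (m:ℝ)^2+4*m := Real.sq_sqrt (by positivity)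
  set x := Real.sqrt ((m:ℝ)^2+4*m) with hx
  induction n with
  | zero =>
    have h2 : qseq m 2 = m * 1 + 1 := by rw [qseq_step]; simp [qseq]
    have h1 : qseq m 1 = 1 := rfl
    rw [h2, h1]; push_cast; ring
  | succ n ih =>
    rw [show 2*(n+1)+2 = 2*n+4 by ring, show 2*(n+1)+1 = 2*n+3 by ring, qseq_even, qseq_odd]
    push_cast
    linear_combination (((m:ℝ)+2+x)/2) * ih + (-(qseq m (2*n+1):ℝ)/4) * hsd
lemma len2 (P φ x mr : ℝ) (hP : P ≠ 0) (hφ : φ ≠ 0)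
    (hq : φ * (mr + 2 - x) = 2) :
    1/(P*φ) - (mr - x)/(2*P) = 1/P := by
  field_simp
  linear_combination (-1) * hq

lemma alg_even (a b P φ x mr : ℝ) (hP : P ≠ 0) (hφ : φ ≠ 0)
    (hq : φ * (mr + 2 - x) = 2) (hkey : b + a * ((x - mr)/2) = P) :
    a * (1/P - (mr - x)/(2*P)) + (b - a) * (1/(P*φ) - (mr - x)/(2*P)) = 1 := by
  rw [len2 P φ x mr hP hφ hq]
  field_simp
  linear_combination 2 * hkey

lemma alg_odd (a b P φ x mr : ℝ) (hP : P ≠ 0) (hφ : φ ≠ 0)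
    (hq : φ * (mr + 2 - x) = 2) (hkey : b + a * ((x - mr)/2) = P) :
    b * ((-mr + x)/(2*P) - -(1/(P*φ))) + (b + a - b) * ((-mr - 1 + x)/P - -(1/(P*φ))) = 1 := by
  have h1 : (-mr + x)/(2*P) - -(1/(P*φ)) = 1/P := by
    rw [← len2 P φ x mr hP hφ hq]; ring
  have h2 : (-mr - 1 + x)/P - -(1/(P*φ)) = (x - mr)/(2*P) := by
    have := len2 P φ x mr hP hφ hq
    field_simp at this ⊢
    linear_combination (-1) * hq
  rw [h1, h2]
  field_simp
  linear_combination 2 * hkey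

lemma toReal_vol_Ico (a b : ℝ) (h : a ≤ b) :
    (MeasureTheory.volume (Set.Ico a b)).toReal = b - a := by
  rw [Real.volume_Ico, ENNReal.toReal_ofReal (by linarith)]

theorem Rk_total_measure (m : ℕ) (hm : 2 ≤ m) (k : ℕ) (hk : 2 ≤ k) :
    (qseq m (k - 1) : ℝ) * (MeasureTheory.volume (A1 m k)).toReal +
        ((qseq m k : ℝ) - (qseq m (k - 1) : ℝ)) *
          (MeasureTheory.volume (A2 m k)).toReal = 1 := by
  have hsd : (Real.sqrt ((m:ℝ)^2+4*m))^2 = (m:ℝ)^2+4*m := Real.sq_sqrt (by positivity)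
  have hx0 : (0:ℝ) ≤ Real.sqrt ((m:ℝ)^2+4*m) := Real.sqrt_nonneg _
  have hm' : (2:ℝ) ≤ m := by exact_mod_cast hm
  have hxm : (m:ℝ) + 1 ≤ Real.sqrt ((m:ℝ)^2+4*m) := by nlinarith
  have hφpos : (0:ℝ) < ((m:ℝ)+2+Real.sqrt ((m:ℝ)^2+4*m))/2 := by linarith
  have hq : (((m:ℝ)+2+Real.sqrt ((m:ℝ)^2+4*m))/2) * ((m:ℝ)+2-Real.sqrt ((m:ℝ)^2+4*m)) = 2 := by
    linear_combination (-1/2 : ℝ) * hsd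
  rcases Nat.even_or_odd k with he | ho
  · have h0 : k % 2 = 0 := Nat.even_iff.mp he
    obtain ⟨j, rfl⟩ : ∃ j, k = 2*j+2 := ⟨k/2 - 1, by omega⟩
    have h1 : (2*j+2) % 2 = 0 := by omega
    have h2 : (2*j+2)/2 = j+1 := by omega
    have h3 : 2*j+2-1 = 2*j+1 := by omega
    have hP : (((m:ℝ)+2+Real.sqrt ((m:ℝ)^2+4*m))/2) ^ (j+1) ≠ 0 := by positivity
    simp only [A1, A2, h1, h2, h3, if_true]
    rw [toReal_vol_Ico, toReal_vol_Ico, pow_succ]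
    · exact alg_even _ _ _ _ _ _ hP (by positivity) hq (key m j)
    · refine le_trans (div_nonpos_iff.mpr (Or.inr ⟨by linarith, by positivity⟩)) (by positivity)
    · refine le_trans (div_nonpos_iff.mpr (Or.inr ⟨by linarith, by positivity⟩)) (by positivity)
  · have h0 : k % 2 = 1 := Nat.odd_iff.mp ho
    obtain ⟨j, rfl⟩ : ∃ j, k = 2*j+3 := ⟨k/2 - 1, by omega⟩
    have h1 : ¬ ((2*j+3) % 2 = 0) := by omega
    have h2 : (2*j+3)/2 = j+1 := by omega
    have h3 : 2*j+3-1 = 2*j+2 := by omega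
    have hP : (((m:ℝ)+2+Real.sqrt ((m:ℝ)^2+4*m))/2) ^ (j+1) ≠ 0 := by positivity
    simp only [A1, A2, h1, h2, h3, if_false]
    rw [toReal_vol_Ico, toReal_vol_Ico, pow_succ, qseq_odd]
    · push_cast
      exact alg_odd _ _ _ _ _ _ hP (by positivity) hq (key m j)
    · have hA : (0:ℝ) ≤ ((-(m:ℝ) - 1 + Real.sqrt ((m:ℝ)^2+4*m)) / (((m:ℝ)+2+Real.sqrt ((m:ℝ)^2+4*m))/2) ^ (j+1)) := by
        apply div_nonneg (by linarith) (by positivity)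
      have hB : -(1 / (((m:ℝ)+2+Real.sqrt ((m:ℝ)^2+4*m))/2) ^ (j+1+1)) ≤ 0 := by
        have : (0:ℝ) ≤ 1 / (((m:ℝ)+2+Real.sqrt ((m:ℝ)^2+4*m))/2) ^ (j+1+1) := by positivity
        linarith
      linarith
    · have hA : (0:ℝ) ≤ ((-(m:ℝ) + Real.sqrt ((m:ℝ)^2+4*m)) / (2 * (((m:ℝ)+2+Real.sqrt ((m:ℝ)^2+4*m))/2) ^ (j+1))) := by
        apply div_nonneg (by linarith) (by positivity)
      have hB : -(1 / (((m:ℝ)+2+Real.sqrt ((m:ℝ)^2+4*m))/2) ^ (j+1+1)) ≤ 0 := by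
        have : (0:ℝ) ≤ 1 / (((m:ℝ)+2+Real.sqrt ((m:ℝ)^2+4*m))/2) ^ (j+1+1) := by positivity
        linarith
      linarith

end
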